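/- Define p_m = exp(m^{−1} Σ_{j=1}^{m} log j) (so p_m ~ m/e as m → ∞). For every Δ ∈ (0, 1/(2e)) and every C > 1 there exist ε ∈ (0, 0.1) and κ̄ ∈ (0, 1/4) such that for every fixed κ ∈ (0, κ̄] there is an integer m₀ with: for all m ≥ m₀, inf_{γ ∈ [−C, −1+2Δ]} m^{−1} Σ_{j=⌊κm⌋}^{m} (j/p_m)^{γ} ≥ 1 + 2ε. -/

import Mathlib

/-- Geometric mean of `1, …, m`: `p_m = exp(m⁻¹ ∑_{j=1}^m log j)` (so `p_m ~ m/e`). -/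
noncomputable def pm (m : ℕ) : ℝ :=
  Real.exp ((m : ℝ)⁻¹ * ∑ j ∈ Finset.Icc 1 m, Real.log j)
lemma sum_log_ge (m : ℕ) :
    (m : ℝ) * Real.log m - m ≤ ∑ j ∈ Finset.Icc 1 m, Real.log j := by
  induction m with
  | zero => simp
  | succ n ih =>
    rw [Finset.sum_Icc_succ_top (by omega)]
    rcases Nat.eq_zero_or_pos n with h | h
    · subst h; simp [Real.log_nonneg]
    have hn : (0:ℝ) < n := by exact_mod_cast h
    have h1 : Real.log ((n:ℝ)+1) - Real.log n ≤ 1 / n := by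
      have := Real.log_le_sub_one_of_pos (x := ((n:ℝ)+1)/n) (by positivity)
      rw [Real.log_div (by positivity) (by positivity)] at this
      have h2 : ((n:ℝ)+1)/n - 1 = 1/n := by field_simp; ring
      linarith
    have h3 : (n:ℝ) * (Real.log ((n:ℝ)+1) - Real.log n) ≤ 1 := by
      calc (n:ℝ) * (Real.log ((n:ℝ)+1) - Real.log n) ≤ (n:ℝ) * (1/n) :=
        mul_le_mul_of_nonneg_left h1 hn.le
      _ = 1 := by field_simp
    push_cast
    nlinarith [ih]

lemma pm_pos (m : ℕ) : 0 < pm m := Real.exp_pos _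

lemma pm_ge (m : ℕ) (hm : 1 ≤ m) : (m : ℝ) / Real.exp 1 ≤ pm m := by
  have hm' : (0:ℝ) < m := by exact_mod_cast hm
  have h1 : Real.log m - 1 ≤ (m:ℝ)⁻¹ * ∑ j ∈ Finset.Icc 1 m, Real.log j := by
    rw [le_inv_mul_iff₀ hm']
    nlinarith [sum_log_ge m]
  calc (m:ℝ) / Real.exp 1 = Real.exp (Real.log m - 1) := by
        rw [Real.exp_sub, Real.exp_log hm']
  _ ≤ pm m := Real.exp_le_exp.mpr h1

lemma pm_le (m : ℕ) (hm : 1 ≤ m) : pm m ≤ (m : ℝ) := by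
  have hm' : (0:ℝ) < m := by exact_mod_cast hm
  have h1 : (m:ℝ)⁻¹ * ∑ j ∈ Finset.Icc 1 m, Real.log j ≤ Real.log m := by
    rw [inv_mul_le_iff₀ hm']
    calc ∑ j ∈ Finset.Icc 1 m, Real.log j ≤ ∑ j ∈ Finset.Icc 1 m, Real.log m := by
          refine Finset.sum_le_sum fun j hj => ?_
          have := (Finset.mem_Icc.mp hj)
          exact Real.log_le_log (by exact_mod_cast this.1) (by exact_mod_cast this.2)
    _ = m * Real.log m := by rw [Finset.sum_const, Nat.card_Icc]; push_cast [Nat.add_sub_cancel]; ring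
  calc pm m ≤ Real.exp (Real.log m) := Real.exp_le_exp.mpr h1
  _ = m := Real.exp_log hm'

set_option maxHeartbeats 1000000 in
/-- Lemma 5.5(a): for `Δ ∈ (0, 1/(2e))` and `C > 1` there are `ε ∈ (0, 0.1)` and
`κ̄ ∈ (0, 1/4)` such that for every `κ ∈ (0, κ̄]` and all large `m`,
`inf_{γ ∈ [-C, -1+2Δ]} m⁻¹ ∑_{j=⌊κm⌋}^m (j/p_m)^γ ≥ 1 + 2ε`. -/
theorem power_sum_lower_bound_negative_exponents (Δ C : ℝ)
    (hΔ : Δ ∈ Set.Ioo (0 : ℝ) (1 / (2 * Real.exp 1))) (hC : 1 < C) :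
    ∃ ε ∈ Set.Ioo (0 : ℝ) 0.1, ∃ κb ∈ Set.Ioo (0 : ℝ) (1/4),
      ∀ κ ∈ Set.Ioc (0 : ℝ) κb, ∃ m₀ : ℕ, ∀ m : ℕ, m₀ ≤ m →
        ∀ γ ∈ Set.Icc (-C) (-1 + 2 * Δ),
          1 + 2 * ε ≤ (m : ℝ)⁻¹ * ∑ j ∈ Finset.Icc ⌊κ * m⌋₊ m, ((j : ℝ) / pm m) ^ γ := by
  obtain ⟨hΔ0, hΔ1⟩ := hΔ
  set e := Real.exp 1 with he_def
  have he1 : 1 < e := by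
    have := Real.exp_one_gt_d9; rw [← he_def] at this; linarith
  have he3 : e < 3 := by
    have := Real.exp_one_lt_d9; rw [← he_def] at this; linarith
  have hΔe : 2 * Δ * e < 1 := by
    rw [lt_div_iff₀ (by positivity : (0:ℝ) < 2 * e)] at hΔ1
    linarith
  have h2Δ1 : 2 * Δ < 1 := by nlinarith
  set s : ℝ := 1 / e - 2 * Δ with hs_def
  have hs0 : 0 < s := by
    have : 2 * Δ < 1 / e := by rw [lt_div_iff₀ (by positivity)]; linarith
    simp only [hs_def]; linarith
  have hs1 : s < 1 := by
    have : 1 / e < 1 := by rw [div_lt_one (by positivity)]; linarith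
    simp only [hs_def]; linarith
  set ε : ℝ := min 0.05 (s / (8 * Δ)) with hε_def
  have hε0 : 0 < ε := lt_min (by norm_num) (by positivity)
  have hε2 : 2 * ε ≤ s / (4 * Δ) := by
    have : ε ≤ s / (8 * Δ) := min_le_right _ _
    have h8 : s / (8 * Δ) * 2 = s / (4 * Δ) := by field_simp; ring
    linarith
  set κb : ℝ := min (1/8) ((s/2) ^ ((2*Δ)⁻¹) : ℝ) with hκb_def
  have hκb0 : 0 < κb := lt_min (by norm_num) (Real.rpow_pos_of_pos (half_pos hs0) _)
  have hκb1 : κb < 1/4 := lt_of_le_of_lt (min_le_left _ _) (by norm_num)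
  have hκb8 : κb ≤ 1/8 := min_le_left _ _
  have hκb2 : κb ^ (2*Δ) ≤ s / 2 := by
    calc κb ^ (2*Δ) ≤ ((s/2) ^ ((2*Δ)⁻¹)) ^ (2*Δ) :=
          Real.rpow_le_rpow hκb0.le (min_le_right _ _) (by positivity)
    _ = s / 2 := by
        rw [← Real.rpow_mul (half_pos hs0).le, inv_mul_cancel₀ (by positivity), Real.rpow_one]
  have hε1 : ε < 0.1 := lt_of_le_of_lt (min_le_left _ _) (by norm_num)
  clear_value s ε κb
  refine ⟨ε, ⟨hε0, hε1⟩, κb, ⟨hκb0, hκb1⟩, ?_⟩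
  rintro κ ⟨hκ0, hκκb⟩
  refine ⟨max 2 ⌈1/κ⌉₊, fun m hm γ hγ => ?_⟩
  obtain ⟨hγ1, hγ2⟩ := hγ
  have hm2 : 2 ≤ m := le_trans (le_max_left _ _) hm
  have hm1 : 1 ≤ m := by omega
  have hmR : (0:ℝ) < m := by exact_mod_cast hm1
  have hκm1 : 1 ≤ κ * m := by
    have h1 : (1/κ : ℝ) ≤ (⌈1/κ⌉₊ : ℕ) := Nat.le_ceil _
    have h2 : ((⌈1/κ⌉₊ : ℕ) : ℝ) ≤ m := by
      exact_mod_cast le_trans (le_max_right 2 _) hm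
    rw [div_le_iff₀ hκ0] at h1
    nlinarith
  set p : ℝ := pm m with hp_def
  have hp0 : 0 < p := pm_pos m
  have hpge : (m:ℝ) / e ≤ p := pm_ge m hm1
  have hple : p ≤ m := pm_le m hm1
  set a : ℕ := ⌊κ * m⌋₊ with ha_def
  have ha1 : 1 ≤ a := Nat.le_floor (by exact_mod_cast hκm1)
  have haR : (a:ℝ) ≤ κ * m := Nat.floor_le (by positivity)
  set N : ℕ := ⌊p⌋₊ with hN_def
  have hNm : N ≤ m := by
    have := Nat.floor_le_floor (R := ℝ) hple
    rwa [Nat.floor_natCast] at this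
  have hNp : p < (N:ℝ) + 1 := by exact_mod_cast Nat.lt_floor_add_one p
  have hNpge : (N:ℝ) ≤ p := Nat.floor_le hp0.le
  have haN : a ≤ N := by
    apply Nat.le_floor
    have h1 : κ * m ≤ m / 8 := by
      have : κ ≤ 1/8 := le_trans hκκb hκb8
      nlinarith
    have h2 : (m:ℝ) / 8 ≤ m / e := by
      apply div_le_div_of_nonneg_left hmR.le (by positivity) (by linarith)
    linarith
  set β : ℝ := -1 + 2*Δ with hβ_def
  have hβ0 : β < 0 := by
    have : 2*Δ < 1 := h2Δ1
    simp only [hβ_def]; linarith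
  have hβ1 : -1 < β := by simp only [hβ_def]; linarith
  clear_value p a N β
  -- Step B: pointwise comparison on Icc a N
  have hB : ∀ j ∈ Finset.Icc a N, ((j:ℝ)/p) ^ β ≤ ((j:ℝ)/p) ^ γ := by
    intro j hj
    obtain ⟨hj1, hj2⟩ := Finset.mem_Icc.mp hj
    have hj0 : (0:ℝ) < j := by exact_mod_cast lt_of_lt_of_le Nat.zero_lt_one (le_trans ha1 hj1)
    have hjp : (j:ℝ) ≤ p := le_trans (by exact_mod_cast hj2) hNpge
    exact Real.rpow_le_rpow_of_exponent_ge (by positivity) (by rw [div_le_one hp0]; exact hjp) hγ2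
  -- Step C: integral lower bound for the sum of (x/p)^β
  have hC' : (∫ x in (a:ℝ)..((N+1 : ℕ):ℝ), (x/p) ^ β) ≤ ∑ j ∈ Finset.Icc a N, ((j:ℝ)/p) ^ β := by
    rw [← Finset.Ico_add_one_right_eq_Icc]
    apply AntitoneOn.integral_le_sum_Ico (by omega)
    intro x hx y hy hxy
    have haR1 : (1:ℝ) ≤ (a:ℝ) := by exact_mod_cast ha1
    have hx0 : (0:ℝ) < x := lt_of_lt_of_le (by linarith) hx.1
    exact Real.rpow_le_rpow_of_nonpos (by positivity) ((div_le_div_iff_of_pos_right hp0).mpr hxy) hβ0.le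
  -- Step D: compute the integral
  have hD : (∫ x in (a:ℝ)..((N+1 : ℕ):ℝ), (x/p) ^ β)
      = p * ((((N+1 : ℕ):ℝ)/p) ^ (2*Δ) - ((a:ℝ)/p) ^ (2*Δ)) / (2*Δ) := by
    rw [intervalIntegral.integral_comp_div (f := fun y => y ^ β) hp0.ne']
    rw [integral_rpow (Or.inl hβ1)]
    have hβ2 : β + 1 = 2*Δ := by simp only [hβ_def]; ring
    rw [hβ2, smul_eq_mul]
    ring
  -- Step E: lower bound the closed form
  have hE1 : (1:ℝ) ≤ (((N+1 : ℕ):ℝ)/p) ^ (2*Δ) := by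
    apply Real.one_le_rpow _ (by positivity)
    rw [le_div_iff₀ hp0, one_mul]
    push_cast
    linarith
  have hE2 : p * ((a:ℝ)/p) ^ (2*Δ) ≤ (s/2) * m := by
    have h1 : ((a:ℝ)/p) ^ (2*Δ) = (a:ℝ) ^ (2*Δ) / p ^ (2*Δ) :=
      Real.div_rpow (by positivity) hp0.le (2*Δ)
    have h2 : p * ((a:ℝ) ^ (2*Δ) / p ^ (2*Δ)) = p ^ (1 - 2*Δ) * (a:ℝ) ^ (2*Δ) := by
      rw [Real.rpow_sub hp0, Real.rpow_one]
      ring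
    have h3 : p ^ (1 - 2*Δ) ≤ (m:ℝ) ^ (1 - 2*Δ) :=
      Real.rpow_le_rpow hp0.le hple (by linarith)
    have h4 : (a:ℝ) ^ (2*Δ) ≤ (κ * m) ^ (2*Δ) :=
      Real.rpow_le_rpow (by positivity) haR (by positivity)
    have h5 : (κ * m) ^ (2*Δ) = κ ^ (2*Δ) * (m:ℝ) ^ (2*Δ) :=
      Real.mul_rpow hκ0.le hmR.le
    have h6 : (m:ℝ) ^ (1 - 2*Δ) * (m:ℝ) ^ (2*Δ) = m := by
      rw [← Real.rpow_add hmR]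
      norm_num
    have h7 : κ ^ (2*Δ) ≤ s/2 := by
      calc κ ^ (2*Δ) ≤ κb ^ (2*Δ) := Real.rpow_le_rpow hκ0.le hκκb (by positivity)
      _ ≤ s/2 := hκb2
    calc p * ((a:ℝ)/p) ^ (2*Δ) = p ^ (1 - 2*Δ) * (a:ℝ) ^ (2*Δ) := by rw [h1, h2]
    _ ≤ (m:ℝ) ^ (1 - 2*Δ) * (κ ^ (2*Δ) * (m:ℝ) ^ (2*Δ)) := by
        apply mul_le_mul h3 (h5 ▸ h4) (by positivity) (by positivity)
    _ = κ ^ (2*Δ) * ((m:ℝ) ^ (1 - 2*Δ) * (m:ℝ) ^ (2*Δ)) := by ring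
    _ = κ ^ (2*Δ) * m := by rw [h6]
    _ ≤ (s/2) * m := mul_le_mul_of_nonneg_right h7 hmR.le
  -- combine: the integral is at least (1 + 2ε) * m
  have hcomb : (1 + 2*ε) * m ≤ p * ((((N+1 : ℕ):ℝ)/p) ^ (2*Δ) - ((a:ℝ)/p) ^ (2*Δ)) / (2*Δ) := by
    have hnum : (1 + 2*ε) * m * (2*Δ) ≤ p * ((((N+1 : ℕ):ℝ)/p) ^ (2*Δ) - ((a:ℝ)/p) ^ (2*Δ)) := by
      have key : p * ((((N+1 : ℕ):ℝ)/p) ^ (2*Δ) - ((a:ℝ)/p) ^ (2*Δ))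
          ≥ p - (s/2) * m := by
        have hkk := mul_le_mul_of_nonneg_left hE1 hp0.le
        have expand : p * ((((N+1 : ℕ):ℝ)/p) ^ (2*Δ) - ((a:ℝ)/p) ^ (2*Δ))
            = p * ((((N+1 : ℕ):ℝ)/p) ^ (2*Δ)) - p * (((a:ℝ)/p) ^ (2*Δ)) := by ring
        rw [expand]
        linarith [hE2]
      have hpm : (m:ℝ) * (1/e) ≤ p := by
        calc (m:ℝ) * (1/e) = m / e := by ring
        _ ≤ p := hpge
      have hse : (1:ℝ)/e = 2*Δ + s := by simp only [hs_def]; ring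
      have hεs : 2*ε*(2*Δ) ≤ s/2 := by
        have h4Δ : (0:ℝ) < 4*Δ := by linarith
        rw [le_div_iff₀ h4Δ] at hε2
        linarith [hε2]
      have h1 : 2*ε*(2*Δ)*m ≤ (s/2)*m := mul_le_mul_of_nonneg_right hεs hmR.le
      have h2 : (m:ℝ) * (2*Δ + s) ≤ p := by rw [← hse]; exact hpm
      linarith [key, h1, h2]
    rw [le_div_iff₀ (by positivity)]
    exact hnum
  -- Step A: extend the sum to Icc a m
  have hA : ∑ j ∈ Finset.Icc a N, ((j:ℝ)/p) ^ γ ≤ ∑ j ∈ Finset.Icc a m, ((j:ℝ)/p) ^ γ := by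
    apply Finset.sum_le_sum_of_subset_of_nonneg (Finset.Icc_subset_Icc_right hNm)
    intro j _ _
    exact Real.rpow_nonneg (by positivity) γ
  have hBsum : ∑ j ∈ Finset.Icc a N, ((j:ℝ)/p) ^ β ≤ ∑ j ∈ Finset.Icc a N, ((j:ℝ)/p) ^ γ :=
    Finset.sum_le_sum hB
  rw [le_inv_mul_iff₀ hmR]
  calc (m:ℝ) * (1 + 2*ε) = (1 + 2*ε) * m := by ring
  _ ≤ p * ((((N+1 : ℕ):ℝ)/p) ^ (2*Δ) - ((a:ℝ)/p) ^ (2*Δ)) / (2*Δ) := hcomb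
  _ = ∫ x in (a:ℝ)..((N+1 : ℕ):ℝ), (x/p) ^ β := hD.symm
  _ ≤ ∑ j ∈ Finset.Icc a N, ((j:ℝ)/p) ^ β := hC'
  _ ≤ ∑ j ∈ Finset.Icc a N, ((j:ℝ)/p) ^ γ := hBsum
  _ ≤ ∑ j ∈ Finset.Icc a m, ((j:ℝ)/p) ^ γ := hA
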